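/- Let f : ℝⁿ → ℝ and F : ℝⁿ → ℝᵐ be continuously differentiable, ρ > 0, α ∈ (0,1), η > 1, σ, M_F > 0 with ρ ≥ (4M_F²/σ²)^η, and define c₁(β) = 2(L_f+β)²/σ², c₂(β) = 2(M_f L_F + (2M_F+σ)β)²/σ⁴ for given L_f, M_f, L_F > 0. Let x_{k−1}, x_k, x_{k+1} ∈ ℝⁿ, λ_{k−1}, λ_k, λ_{k+1} ∈ ℝᵐ, β_k, β_{k+1} > 0 and γ_k, γ_{k+1} > 0 satisfy: (i) the descent L_ρ(x_{k+1},λ_k) ≤ L_ρ(x_k,λ_k) − ((ρσ² + αβ_{k+1})/2)‖x_{k+1}−x_k‖²; (ii) λ_{k+1} − λ_k = ρ(F(x_k) + F'(x_k)(x_{k+1}−x_k)); (iii) ‖F(x_{k+1}) − F(x_k) − F'(x_k)(x_{k+1}−x_k)‖ ≤ 2M_F‖x_{k+1}−x_k‖; (iv) ‖λ_{k+1} − λ_k‖² ≤ c₁(β_{k+1})‖x_{k+1}−x_k‖² + c₂(β_k)‖x_k−x_{k−1}‖²; (v) γ_j = 4(1/(2ρ^{(η−1)/η}) + 1/ρ)·max{c₁(β_j),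 c₂(β_j)} and γ_j ≤ αβ_j/2 for j ∈ {k, k+1}. Then, writing P_j = L_ρ(x_j,λ_j) + (γ_j/2)‖x_j − x_{j−1}‖², one has P_{k+1} − P_k ≤ −(γ_{k+1}/4)‖x_{k+1}−x_k‖² − (γ_k/4)‖x_k−x_{k−1}‖². -/

import Mathlib

open scoped RealInnerProductSpace

private lemma young_aux (t x y : ℝ) (ht : 0 < t) :
    x * y ≤ x ^ 2 / (2 * t) + t / 2 * y ^ 2 := by
  have hform : x ^ 2 / (2 * t) + t / 2 * y ^ 2 = (x ^ 2 + t ^ 2 * y ^ 2) / (2 * t) := by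
    field_simp
  rw [hform, le_div_iff₀ (by positivity)]
  nlinarith [sq_nonneg (x - t * y)]

set_option maxHeartbeats 1000000

/-- Decrease of the Lyapunov function `P_j = L_ρ(x_j,λ_j) + (γ_j/2)‖x_j−x_{j−1}‖²`
along Linearized AL iterates:
`P_{k+1} − P_k ≤ −(γ_{k+1}/4)‖x_{k+1}−x_k‖² − (γ_k/4)‖x_k−x_{k−1}‖²`. -/
theorem stmt_7 (n m : ℕ)
    (f : EuclideanSpace ℝ (Fin n) → ℝ)
    (F : EuclideanSpace ℝ (Fin n) → EuclideanSpace ℝ (Fin m))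
    (hf : ContDiff ℝ 1 f) (hF : ContDiff ℝ 1 F)
    (ρ : ℝ) (hρ : 0 < ρ) (α : ℝ) (hα : α ∈ Set.Ioo (0 : ℝ) 1)
    (η : ℝ) (hη : 1 < η) (σ M_F : ℝ) (hσ : 0 < σ) (hMF : 0 < M_F)
    (hρbig : (4 * M_F ^ 2 / σ ^ 2) ^ η ≤ ρ)
    (L_f M_f L_F : ℝ) (hLf : 0 < L_f) (hMf : 0 < M_f) (hLF : 0 < L_F)
    (xkm xk xkp : EuclideanSpace ℝ (Fin n))
    (lamkm lamk lamkp : EuclideanSpace ℝ (Fin m))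
    (βk βkp γk γkp : ℝ) (hβk : 0 < βk) (hβkp : 0 < βkp)
    (hγk : 0 < γk) (hγkp : 0 < γkp)
    -- (i) descent of the augmented Lagrangian in the primal variables
    (hdescent :
      f xkp + ⟪lamk, F xkp⟫ + ρ / 2 * ‖F xkp‖ ^ 2 ≤
        f xk + ⟪lamk, F xk⟫ + ρ / 2 * ‖F xk‖ ^ 2 -
          (ρ * σ ^ 2 + α * βkp) / 2 * ‖xkp - xk‖ ^ 2)
    -- (ii) dual update
    (hdual : lamkp - lamk = ρ • (F xk + fderiv ℝ F xk (xkp - xk)))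
    -- (iii) linearization error bound
    (hlin : ‖F xkp - F xk - fderiv ℝ F xk (xkp - xk)‖ ≤ 2 * M_F * ‖xkp - xk‖)
    -- (iv) bound on the dual increment
    (hlam : ‖lamkp - lamk‖ ^ 2 ≤
        2 * (L_f + βkp) ^ 2 / σ ^ 2 * ‖xkp - xk‖ ^ 2 +
        2 * (M_f * L_F + (2 * M_F + σ) * βk) ^ 2 / σ ^ 4 * ‖xk - xkm‖ ^ 2)
    -- (v) choice of the proximal weights γ
    (hγkdef : γk = 4 * (1 / (2 * ρ ^ ((η - 1) / η)) + 1 / ρ) *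
        max (2 * (L_f + βk) ^ 2 / σ ^ 2)
          (2 * (M_f * L_F + (2 * M_F + σ) * βk) ^ 2 / σ ^ 4))
    (hγkpdef : γkp = 4 * (1 / (2 * ρ ^ ((η - 1) / η)) + 1 / ρ) *
        max (2 * (L_f + βkp) ^ 2 / σ ^ 2)
          (2 * (M_f * L_F + (2 * M_F + σ) * βkp) ^ 2 / σ ^ 4))
    (hγkle : γk ≤ α * βk / 2) (hγkple : γkp ≤ α * βkp / 2) :
    (f xkp + ⟪lamkp, F xkp⟫ + ρ / 2 * ‖F xkp‖ ^ 2 + γkp / 2 * ‖xkp - xk‖ ^ 2) -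
      (f xk + ⟪lamk, F xk⟫ + ρ / 2 * ‖F xk‖ ^ 2 + γk / 2 * ‖xk - xkm‖ ^ 2) ≤
      -(γkp / 4) * ‖xkp - xk‖ ^ 2 - γk / 4 * ‖xk - xkm‖ ^ 2 := by
  obtain ⟨hα0, hα1⟩ := hα
  have hηpos : (0:ℝ) < η := by linarith
  set a := ‖xkp - xk‖ ^ 2 with ha
  set b := ‖xk - xkm‖ ^ 2 with hb
  have ha0 : 0 ≤ a := sq_nonneg _
  have hb0 : 0 ≤ b := sq_nonneg _
  set t := ρ ^ ((η - 1) / η) with htdef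
  have ht : (0:ℝ) < t := Real.rpow_pos_of_pos hρ _
  set C := 1 / (2 * t) + 1 / ρ with hCdef
  have hC : (0:ℝ) < C := by positivity
  obtain ⟨e, he⟩ : ∃ e, e = F xkp - F xk - fderiv ℝ F xk (xkp - xk) := ⟨_, rfl⟩
  obtain ⟨dlam, hdlam⟩ : ∃ d, d = lamkp - lamk := ⟨_, rfl⟩
  have hσ2 : (0:ℝ) < σ ^ 2 := by positivity
  -- Step 1 : 4 M_F^2 * t ≤ ρ * σ^2
  have h1 : 4 * M_F ^ 2 / σ ^ 2 ≤ ρ ^ (1 / η) := by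
    have hbase : (0:ℝ) ≤ 4 * M_F ^ 2 / σ ^ 2 := by positivity
    have h2 : ((4 * M_F ^ 2 / σ ^ 2) ^ η) ^ (1 / η) ≤ ρ ^ (1 / η) :=
      Real.rpow_le_rpow (Real.rpow_nonneg hbase η) hρbig (by positivity)
    rwa [← Real.rpow_mul hbase, mul_one_div, div_self hηpos.ne', Real.rpow_one] at h2
  have hmul : ρ ^ (1 / η) * t = ρ := by
    rw [htdef, ← Real.rpow_add hρ, show 1 / η + (η - 1) / η = 1 by field_simp; ring,
      Real.rpow_one]
  have hkey : 4 * M_F ^ 2 * t ≤ ρ * σ ^ 2 := by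
    have h1' : 4 * M_F ^ 2 ≤ σ ^ 2 * ρ ^ (1 / η) := by
      rw [div_le_iff₀ hσ2] at h1; linarith
    calc 4 * M_F ^ 2 * t ≤ σ ^ 2 * ρ ^ (1 / η) * t :=
          mul_le_mul_of_nonneg_right h1' ht.le
    _ = σ ^ 2 * (ρ ^ (1 / η) * t) := by ring
    _ = ρ * σ ^ 2 := by rw [hmul]; ring
  -- Step 2 : express F xkp and expand the dual inner-product term
  have hFxkp : F xkp = ρ⁻¹ • dlam + e := by
    rw [hdlam, hdual, smul_smul, inv_mul_cancel₀ hρ.ne', one_smul, he]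
    abel
  have hinner : ⟪lamkp, F xkp⟫ - ⟪lamk, F xkp⟫ = ρ⁻¹ * ‖dlam‖ ^ 2 + ⟪dlam, e⟫ := by
    rw [← inner_sub_left, ← hdlam, hFxkp, inner_add_right, real_inner_smul_right,
      real_inner_self_eq_norm_sq]
  have hCS : ⟪dlam, e⟫ ≤ ‖dlam‖ * ‖e‖ := real_inner_le_norm _ _
  have hyoung : ‖dlam‖ * ‖e‖ ≤ ‖dlam‖ ^ 2 / (2 * t) + t / 2 * ‖e‖ ^ 2 :=
    young_aux t ‖dlam‖ ‖e‖ ht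
  have hlin' : ‖e‖ ≤ 2 * M_F * ‖xkp - xk‖ := by rw [he]; exact hlin
  have hebound : ‖e‖ ^ 2 ≤ 4 * M_F ^ 2 * a := by
    have h0 : (0:ℝ) ≤ ‖e‖ := norm_nonneg _
    calc ‖e‖ ^ 2 ≤ (2 * M_F * ‖xkp - xk‖) ^ 2 := pow_le_pow_left₀ h0 hlin' 2
    _ = 4 * M_F ^ 2 * a := by rw [ha]; ring
  have het : t / 2 * ‖e‖ ^ 2 ≤ ρ * σ ^ 2 / 2 * a := by
    have h5 : t / 2 * ‖e‖ ^ 2 ≤ t / 2 * (4 * M_F ^ 2 * a) :=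
      mul_le_mul_of_nonneg_left hebound (by positivity)
    have h6 : 4 * M_F ^ 2 * t * a ≤ ρ * σ ^ 2 * a :=
      mul_le_mul_of_nonneg_right hkey ha0
    calc t / 2 * ‖e‖ ^ 2 ≤ t / 2 * (4 * M_F ^ 2 * a) := h5
    _ = 4 * M_F ^ 2 * t * a / 2 := by ring
    _ ≤ ρ * σ ^ 2 / 2 * a := by linarith
  -- Step 3 : bound C‖dlam‖² by the γ's
  have hlam' : ‖dlam‖ ^ 2 ≤ 2 * (L_f + βkp) ^ 2 / σ ^ 2 * a +
      2 * (M_f * L_F + (2 * M_F + σ) * βk) ^ 2 / σ ^ 4 * b := by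
    rw [hdlam]; exact hlam
  have hγkp4 : C * (2 * (L_f + βkp) ^ 2 / σ ^ 2) ≤ γkp / 4 := by
    have := mul_le_mul_of_nonneg_left
      (le_max_left (2 * (L_f + βkp) ^ 2 / σ ^ 2)
        (2 * (M_f * L_F + (2 * M_F + σ) * βkp) ^ 2 / σ ^ 4)) hC.le
    rw [hγkpdef]; linarith
  have hγk4 : C * (2 * (M_f * L_F + (2 * M_F + σ) * βk) ^ 2 / σ ^ 4) ≤ γk / 4 := by
    have := mul_le_mul_of_nonneg_left
      (le_max_right (2 * (L_f + βk) ^ 2 / σ ^ 2)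
        (2 * (M_f * L_F + (2 * M_F + σ) * βk) ^ 2 / σ ^ 4)) hC.le
    rw [hγkdef]; linarith
  have hB : C * ‖dlam‖ ^ 2 ≤ γkp / 4 * a + γk / 4 * b := by
    calc C * ‖dlam‖ ^ 2
        ≤ C * (2 * (L_f + βkp) ^ 2 / σ ^ 2 * a +
            2 * (M_f * L_F + (2 * M_F + σ) * βk) ^ 2 / σ ^ 4 * b) :=
          mul_le_mul_of_nonneg_left hlam' hC.le
    _ = (C * (2 * (L_f + βkp) ^ 2 / σ ^ 2)) * a +
          (C * (2 * (M_f * L_F + (2 * M_F + σ) * βk) ^ 2 / σ ^ 4)) * b := by ring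
    _ ≤ γkp / 4 * a + γk / 4 * b :=
        add_le_add (mul_le_mul_of_nonneg_right hγkp4 ha0)
          (mul_le_mul_of_nonneg_right hγk4 hb0)
  -- Step 4 : combine everything
  have hCexp : ρ⁻¹ * ‖dlam‖ ^ 2 + ‖dlam‖ ^ 2 / (2 * t) = C * ‖dlam‖ ^ 2 := by
    rw [hCdef]; field_simp; ring
  have hA : ⟪lamkp, F xkp⟫ - ⟪lamk, F xkp⟫ ≤
      γkp / 4 * a + γk / 4 * b + ρ * σ ^ 2 / 2 * a := by
    linarith [hinner, hCS, hyoung, het, hB, hCexp]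
  have hprod : γkp * a ≤ α * βkp / 2 * a :=
    mul_le_mul_of_nonneg_right hγkple ha0
  linarith [hdescent, hA, hprod]
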